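/- Let R be a Noetherian Dubrovin valuation ring of a simple Artinian ring A with Jacobson radical P. Then for all fractional R-ideals I and J of A: IJ ⊆ P if and only if JI ⊆ P. -/

import Mathlib

open Pointwise

/-- `P` is a two-sided ideal of the subring `R` of `A`. -/
def IsIdealOf {A : Type*} [Ring A] (R : Subring A) (P : Set A) : Prop :=
  P ⊆ (R : Set A) ∧ (0 : A) ∈ P ∧ (∀ x ∈ P, ∀ y ∈ P, x + y ∈ P) ∧ (∀ x ∈ P, -x ∈ P) ∧
    (∀ r ∈ R, ∀ p ∈ P, r * p ∈ P) ∧ (∀ r ∈ R, ∀ p ∈ P, p * r ∈ P)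

/-- `(R, P)` is a prime in the ring `A`. -/
def IsPrimeIn {A : Type*} [Ring A] (R : Subring A) (P : Set A) : Prop :=
  IsIdealOf R P ∧ ∀ x y : A, (∀ r ∈ R, x * r * y ∈ P) → x ∈ P ∨ y ∈ P

/-- `(R, P)` is a strict fractional prime in the ring `A`. -/
def IsStrictFractionalPrime {A : Type*} [Ring A] (R : Subring A) (P : Set A) : Prop :=
  IsPrimeIn R P ∧ ∀ r : A, r ≠ 0 → ∃ x ∈ R, ∃ y ∈ R, x * r * y ≠ 0 ∧ x * r * y ∈ R

/-- The set of elements of the subring `R` which are regular in `R`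
(non-zero-divisors of the ring `R`). -/
def regularIn {A : Type*} [Ring A] (R : Subring A) : Set A :=
  {x : A | x ∈ R ∧ (∀ y ∈ R, x * y = 0 → y = 0) ∧ (∀ y ∈ R, y * x = 0 → y = 0)}

/-- A ring is Goldie if its set of regular elements satisfies the left and right Ore
conditions and the corresponding Ore localization is a semisimple ring. -/
def IsGoldieRing (R : Type*) [Ring R] : Prop :=
  (∀ (r : R), ∀ s ∈ nonZeroDivisors R, ∃ r' : R, ∃ s' ∈ nonZeroDivisors R, s' * r = r' * s) ∧
  (∀ (r : R), ∀ s ∈ nonZeroDivisors R, ∃ r' : R, ∃ s' ∈ nonZeroDivisors R, r * s' = s * r') ∧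
  ∃ _i : OreLocalization.OreSet (nonZeroDivisors R),
    IsSemisimpleRing (OreLocalization (nonZeroDivisors R) R)

/-- `A^P`, the set of elements of `A` stabilizing `P` on both sides. -/
def stabilizerSet {A : Type*} [Ring A] (P : Set A) : Set A :=
  {a : A | (∀ p ∈ P, a * p ∈ P) ∧ ∀ p ∈ P, p * a ∈ P}

/-- The fractional `R`-ideals of `A`. -/
def IsFractionalIdeal {A : Type*} [Ring A] (R : Subring A) (I : Set A) : Prop :=
  ((0 : A) ∈ I ∧ (∀ x ∈ I, ∀ y ∈ I, x + y ∈ I) ∧ (∀ x ∈ I, -x ∈ I)) ∧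
  (∀ r ∈ R, ∀ x ∈ I, r * x ∈ I) ∧ (∀ r ∈ R, ∀ x ∈ I, x * r ∈ I) ∧
  (∃ u ∈ I, u ∈ regularIn R) ∧ (∃ r ∈ regularIn R, ∀ x ∈ I, r * x ∈ (R : Set A))

/-- The fractional ideal `RaR` generated by an element `a ∈ A`. -/
def genFracIdeal {A : Type*} [Ring A] (R : Subring A) (a : A) : Set A :=
  (R : Set A) * {a} * (R : Set A)

/-- `v(I) = (P : I) = {a ∈ A ∣ aI ⊆ P}`. -/
def vP {A : Type*} [Ring A] (P I : Set A) : Set A :=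
  {a : A | ∀ x ∈ I, a * x ∈ P}

/-- The additive subgroup generated by the `n`-fold products of elements of `P`. -/
def idealPow {A : Type*} [Ring A] (P : Set A) (n : ℕ) : Set A :=
  (AddSubgroup.closure (P ^ n) : Set A)

/-- `C(P)`: the elements of `R` which are regular modulo `P`. -/
def CP {A : Type*} [Ring A] (R : Subring A) (P : Set A) : Set A :=
  {x : A | x ∈ R ∧ (∀ y ∈ R, x * y ∈ P → y ∈ P) ∧ ∀ y ∈ R, y * x ∈ P → y ∈ P}

/-- `R` is an order in `A`: every regular element of `R` is invertible in `A` and every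
element of `A` is of the form `s⁻¹ * r` and of the form `r' * s'⁻¹` with `r, r' ∈ R` and
`s, s'` regular in `R`. -/
def IsOrderIn {A : Type*} [Ring A] (R : Subring A) : Prop :=
  (∀ s ∈ regularIn R, IsUnit s) ∧
  (∀ a : A, ∃ s ∈ regularIn R, ∃ r ∈ (R : Set A), s * a = r) ∧
  (∀ a : A, ∃ s ∈ regularIn R, ∃ r ∈ (R : Set A), a * s = r)

/-- `R` is a Dubrovin valuation ring of `A` with associated ideal `P`:
`P` is a two-sided ideal of `R` such that `R/P` is a simple Artinian ring and for every
`a ∈ A \ R` there are `x, y ∈ R` with `xa ∈ R \ P` and `ay ∈ R \ P`. -/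
def IsDubrovinValuation {A : Type*} [Ring A] (R : Subring A) (P : Set A) : Prop :=
  IsIdealOf R P ∧
  (∀ Q : TwoSidedIdeal R, (∀ x : R, x ∈ Q ↔ (x : A) ∈ P) →
    IsSimpleRing Q.ringCon.Quotient ∧ IsArtinianRing Q.ringCon.Quotient) ∧
  ∀ a : A, a ∉ R →
    (∃ x ∈ R, x * a ∈ R ∧ x * a ∉ P) ∧ (∃ y ∈ R, a * y ∈ R ∧ a * y ∉ P)

/-- `P` coincides with the Jacobson radical of the subring `R` (the intersection of the
maximal left ideals of `R`). -/
def IsJacobsonRadicalOf {A : Type*} [Ring A] (R : Subring A) (P : Set A) : Prop :=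
  ∀ x : R, (x : A) ∈ P ↔ x ∈ (⊥ : Ideal R).jacobson

section DubrovinHelpers

variable {A : Type*} [Ring A] {R : Subring A} {P : Set A}

/-- Elements of the Jacobson radical are left quasi-regular. -/
private lemma dubrovin_left_quasi (hjac : IsJacobsonRadicalOf R P)
    (q : ↥R) (hq : (q : A) ∈ P) : ∃ u : ↥R, u * (1 - q) = 1 := by
  by_contra h
  push_neg at h
  have hspan : Ideal.span {(1 - q : ↥R)} ≠ ⊤ := by
    intro htop
    have h1 : (1 : ↥R) ∈ Ideal.span {(1 - q : ↥R)} := htop ▸ Submodule.mem_top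
    obtain ⟨u, hu⟩ := Submodule.mem_span_singleton.mp h1
    exact h u (by simpa [smul_eq_mul] using hu)
  obtain ⟨M, hM, hle⟩ := Ideal.exists_le_maximal _ hspan
  have hqM : q ∈ M := by
    have h2 : q ∈ (⊥ : Ideal ↥R).jacobson := (hjac q).mp hq
    have h3 : (⊥ : Ideal ↥R).jacobson ≤ M := sInf_le ⟨bot_le, hM⟩
    exact h3 h2
  have h1M : (1 - q : ↥R) ∈ M := hle (Ideal.subset_span rfl)
  have hone : (1 : ↥R) ∈ M := by simpa using add_mem h1M hqM
  exact hM.ne_top ((Ideal.eq_top_iff_one M).mpr hone)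

/-- Elements of the Jacobson radical of a two-sided-ideal `P` are two-sided quasi-regular. -/
private lemma dubrovin_quasi_inv (hP : IsIdealOf R P) (hjac : IsJacobsonRadicalOf R P)
    (q : ↥R) (hq : (q : A) ∈ P) :
    ∃ u : ↥R, u * (1 - q) = 1 ∧ (1 - q) * u = 1 := by
  obtain ⟨u, hu⟩ := dubrovin_left_quasi hjac q hq
  have hq2 : ((-(u * q) : ↥R) : A) ∈ P := by
    push_cast
    exact hP.2.2.2.1 _ (hP.2.2.2.2.1 _ u.2 _ hq)
  obtain ⟨w, hw⟩ := dubrovin_left_quasi hjac (-(u * q)) hq2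
  have hu2 : u - u * q = 1 := by rw [← mul_one_sub]; exact hu
  have hueq : (1 : ↥R) - -(u * q) = u := by
    rw [sub_neg_eq_add]
    exact (sub_eq_iff_eq_add.mp hu2).symm
  rw [hueq] at hw
  have hweq : w = 1 - q := by
    calc w = w * (u * (1 - q)) := by rw [hu, mul_one]
      _ = (w * u) * (1 - q) := by rw [mul_assoc]
      _ = 1 - q := by rw [hw, one_mul]
  refine ⟨u, hu, ?_⟩
  rw [← hweq]
  exact hw

/-- Hand-rolled right-module Nakayama: if finitely many elements of `A` are each right
`P`-combinations of each other, they all vanish. -/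
private lemma dubrovin_nakayama (hP : IsIdealOf R P) (hjac : IsJacobsonRadicalOf R P) :
    ∀ (n : ℕ) (g : Fin n → A),
      (∀ k, ∃ q : Fin n → A, (∀ m, q m ∈ P) ∧ g k = ∑ m, g m * q m) → ∀ k, g k = 0 := by
  intro n
  induction n with
  | zero => intro g _ k; exact k.elim0
  | succ n ih =>
    intro g hg
    obtain ⟨qL, hqLP, hL⟩ := hg (Fin.last n)
    obtain ⟨u, _, hu2⟩ := dubrovin_quasi_inv hP hjac
      ⟨qL (Fin.last n), hP.1 (hqLP _)⟩ (hqLP _)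
    have hu2A : (1 - qL (Fin.last n)) * (u : A) = 1 := by
      have := congrArg (fun t : ↥R => (t : A)) hu2
      push_cast at this
      simpa using this
    rw [Fin.sum_univ_castSucc] at hL
    have h1 : g (Fin.last n) * (1 - qL (Fin.last n)) =
        ∑ m : Fin n, g m.castSucc * qL m.castSucc := by
      rw [mul_one_sub, sub_eq_iff_eq_add]
      exact hL
    have hLrep : g (Fin.last n) =
        ∑ m : Fin n, g m.castSucc * (qL m.castSucc * (u : A)) := by
      calc g (Fin.last n) = g (Fin.last n) * ((1 - qL (Fin.last n)) * (u : A)) := by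
            rw [hu2A, mul_one]
        _ = (g (Fin.last n) * (1 - qL (Fin.last n))) * (u : A) := by rw [mul_assoc]
        _ = (∑ m : Fin n, g m.castSucc * qL m.castSucc) * (u : A) := by rw [h1]
        _ = ∑ m : Fin n, g m.castSucc * (qL m.castSucc * (u : A)) := by
            rw [Finset.sum_mul]
            exact Finset.sum_congr rfl fun m _ => by rw [mul_assoc]
    have hg' : ∀ k : Fin n, ∃ q : Fin n → A, (∀ m, q m ∈ P) ∧
        (fun l : Fin n => g l.castSucc) k = ∑ m : Fin n, (fun l : Fin n => g l.castSucc) m * q m := by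
      intro k
      obtain ⟨qk, hqkP, hk⟩ := hg k.castSucc
      refine ⟨fun m => qk m.castSucc + qL m.castSucc * (u : A) * qk (Fin.last n),
        fun m => ?_, ?_⟩
      · have hs1 : qL m.castSucc * (u : A) ∈ P := hP.2.2.2.2.2 _ u.2 _ (hqLP _)
        have hs2 : qL m.castSucc * (u : A) * qk (Fin.last n) ∈ P :=
          hP.2.2.2.2.2 _ (hP.1 (hqkP _)) _ hs1
        exact hP.2.2.1 _ (hqkP _) _ hs2
      · show g k.castSucc = _
        rw [hk, Fin.sum_univ_castSucc, hLrep, Finset.sum_mul, ← Finset.sum_add_distrib]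
        exact Finset.sum_congr rfl fun m _ => by rw [mul_add, mul_assoc]
    have h0 : ∀ m : Fin n, g m.castSucc = 0 := ih (fun l => g l.castSucc) hg'
    intro k
    refine Fin.lastCases ?_ ?_ k
    · rw [hLrep]
      simp [h0]
    · intro m
      exact h0 m

end DubrovinHelpers

theorem statement_16 {A : Type*} [Ring A] [IsSimpleRing A] [IsArtinianRing A]
    (R : Subring A) (P : Set A)
    (hdub : IsDubrovinValuation R P)
    (hjac : IsJacobsonRadicalOf R P)
    (hnoeth : IsNoetherianRing R) (hnoethop : IsNoetherianRing (↥R)ᵐᵒᵖ) :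
    ∀ I J : Set A, IsFractionalIdeal R I → IsFractionalIdeal R J →
      (I * J ⊆ P ↔ J * I ⊆ P) := by
  have key : ∀ I J : Set A, IsFractionalIdeal R I → IsFractionalIdeal R J →
      I * J ⊆ P → J * I ⊆ P := by
    intro I J hI hJ hIJ x hx
    obtain ⟨j, hj, i, hi, rfl⟩ := Set.mem_mul.mp hx
    by_contra hji
    exfalso
    have hPfull := hdub.1
    obtain ⟨hPfull', hsimp, hval⟩ := hdub
    obtain ⟨hPR, hP0, hPadd, hPneg, hPml, hPmr⟩ := hPfull'
    have hJl : ∀ r ∈ R, ∀ y ∈ J, r * y ∈ J := hJ.2.1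
    have hJr : ∀ r ∈ R, ∀ y ∈ J, y * r ∈ J := hJ.2.2.1
    have hIr : ∀ r ∈ R, ∀ y ∈ I, y * r ∈ I := hI.2.2.1
    obtain ⟨v0, hv0J, hv0reg⟩ := hJ.2.2.2.1
    obtain ⟨w, hwreg, hwJ⟩ := hJ.2.2.2.2
    -- the additive subgroup generated by J * I, and P as an additive subgroup
    set Psub : AddSubgroup A :=
      { carrier := P
        add_mem' := fun ha hb => hPadd _ ha _ hb
        zero_mem' := hP0
        neg_mem' := fun ha => hPneg _ ha } with hPsub
    set Csp : AddSubgroup A := AddSubgroup.closure (J * I) with hCsp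
    have hCl : ∀ y ∈ (R : Set A), ∀ z ∈ Csp, y * z ∈ Csp := by
      intro y hyR z hz
      refine AddSubgroup.closure_induction (p := fun t _ => y * t ∈ Csp) ?_ ?_ ?_ ?_ hz
      · intro t ht
        obtain ⟨j₂, hj₂, i₂, hi₂, rfl⟩ := Set.mem_mul.mp ht
        rw [← mul_assoc]
        exact AddSubgroup.subset_closure (Set.mul_mem_mul (hJl y hyR j₂ hj₂) hi₂)
      · simpa using Csp.zero_mem
      · intro a b _ _ ha hb; rw [mul_add]; exact Csp.add_mem ha hb
      · intro a _ ha; rw [mul_neg]; exact Csp.neg_mem ha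
    have hCr : ∀ y ∈ (R : Set A), ∀ z ∈ Csp, z * y ∈ Csp := by
      intro y hyR z hz
      refine AddSubgroup.closure_induction (p := fun t _ => t * y ∈ Csp) ?_ ?_ ?_ ?_ hz
      · intro t ht
        obtain ⟨j₂, hj₂, i₂, hi₂, rfl⟩ := Set.mem_mul.mp ht
        rw [mul_assoc]
        exact AddSubgroup.subset_closure (Set.mul_mem_mul hj₂ (hIr y hyR i₂ hi₂))
      · simpa using Csp.zero_mem
      · intro a b _ _ ha hb; rw [add_mul]; exact Csp.add_mem ha hb
      · intro a _ ha; rw [neg_mul]; exact Csp.neg_mem ha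
    -- extract c ∈ R \ P with c ∈ Csp
    obtain ⟨c, hcR, hcP, hcC⟩ : ∃ c : A, c ∈ R ∧ c ∉ P ∧ c ∈ Csp := by
      by_cases hmem : j * i ∈ R
      · exact ⟨j * i, hmem, hji, AddSubgroup.subset_closure (Set.mul_mem_mul hj hi)⟩
      · obtain ⟨y, hyR, hyaR, hyaP⟩ := (hval _ hmem).1
        refine ⟨y * (j * i), hyaR, hyaP, ?_⟩
        rw [← mul_assoc]
        exact AddSubgroup.subset_closure (Set.mul_mem_mul (hJl y hyR j hj) hi)
    -- P as a two-sided ideal of R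
    set Q : TwoSidedIdeal ↥R := TwoSidedIdeal.mk' {z : ↥R | (z : A) ∈ P}
      (by show ((0 : ↥R) : A) ∈ P; simpa using hP0)
      (fun {a b} ha hb => by show ((a + b : ↥R) : A) ∈ P; push_cast; exact hPadd _ ha _ hb)
      (fun {a} ha => by show ((-a : ↥R) : A) ∈ P; push_cast; exact hPneg _ ha)
      (fun {a b} hb => by show ((a * b : ↥R) : A) ∈ P; push_cast; exact hPml _ a.2 _ hb)
      (fun {a b} ha => by show ((a * b : ↥R) : A) ∈ P; push_cast; exact hPmr _ b.2 _ ha)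
      with hQdef
    have hQmem : ∀ z : ↥R, z ∈ Q ↔ (z : A) ∈ P := fun z => by
      rw [hQdef, TwoSidedIdeal.mem_mk']; rfl
    have hsimple : IsSimpleRing Q.ringCon.Quotient := (hsimp Q hQmem).1
    set CPsp : AddSubgroup A := Csp ⊔ Psub with hCPsp
    have hCPl : ∀ y ∈ (R : Set A), ∀ z ∈ CPsp, y * z ∈ CPsp := by
      intro y hyR z hz
      obtain ⟨k, hk, p, hp, rfl⟩ := AddSubgroup.mem_sup.mp hz
      rw [mul_add]
      exact CPsp.add_mem (AddSubgroup.mem_sup_left (hCl y hyR k hk))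
        (AddSubgroup.mem_sup_right (hPml y hyR p hp))
    have hCPr : ∀ y ∈ (R : Set A), ∀ z ∈ CPsp, z * y ∈ CPsp := by
      intro y hyR z hz
      obtain ⟨k, hk, p, hp, rfl⟩ := AddSubgroup.mem_sup.mp hz
      rw [add_mul]
      exact CPsp.add_mem (AddSubgroup.mem_sup_left (hCr y hyR k hk))
        (AddSubgroup.mem_sup_right (hPmr y hyR p hp))
    set mkQ : ↥R → Q.ringCon.Quotient := fun z => (z : Q.ringCon.Quotient) with hmkQ
    have hsurj : ∀ y : Q.ringCon.Quotient, ∃ z : ↥R, mkQ z = y := fun y => Quot.exists_rep y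
    -- the image two-sided ideal in the quotient
    obtain ⟨E, hEmem⟩ : ∃ E : TwoSidedIdeal Q.ringCon.Quotient,
        ∀ z, z ∈ E ↔ ∃ x : ↥R, (x : A) ∈ CPsp ∧ mkQ x = z := by
      refine ⟨TwoSidedIdeal.mk' {y | ∃ x : ↥R, (x : A) ∈ CPsp ∧ mkQ x = y}
        ⟨0, by simpa using CPsp.zero_mem, rfl⟩
        ?_ ?_ ?_ ?_, fun z => by rw [TwoSidedIdeal.mem_mk']; rfl⟩
      · rintro a b ⟨x₁, hx₁, rfl⟩ ⟨x₂, hx₂, rfl⟩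
        exact ⟨x₁ + x₂, by push_cast; exact CPsp.add_mem hx₁ hx₂, rfl⟩
      · rintro a ⟨x₁, hx₁, rfl⟩
        exact ⟨-x₁, by push_cast; exact CPsp.neg_mem hx₁, rfl⟩
      · rintro a b ⟨x₁, hx₁, rfl⟩
        obtain ⟨ra, rfl⟩ := hsurj a
        exact ⟨ra * x₁, by push_cast; exact hCPl _ ra.2 _ hx₁, rfl⟩
      · rintro a b ⟨x₁, hx₁, rfl⟩
        obtain ⟨rb, rfl⟩ := hsurj b
        exact ⟨x₁ * rb, by push_cast; exact hCPr _ rb.2 _ hx₁, rfl⟩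
    rcases hsimple.simple.eq_bot_or_eq_top E with hbot | htop
    · -- impossible: c gives a nonzero element of E
      have hcE : mkQ ⟨c, hcR⟩ ∈ E :=
        (hEmem _).mpr ⟨⟨c, hcR⟩, AddSubgroup.mem_sup_left hcC, rfl⟩
      rw [hbot, TwoSidedIdeal.mem_bot] at hcE
      have h0 : ((⟨c, hcR⟩ : ↥R) : Q.ringCon.Quotient) = ((0 : ↥R) : Q.ringCon.Quotient) := hcE
      rw [RingCon.eq] at h0
      have hcQ : (⟨c, hcR⟩ : ↥R) ∈ Q := by
        have := (TwoSidedIdeal.rel_iff Q _ _).mp h0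
        simpa using this
      exact hcP ((hQmem _).mp hcQ)
    · -- E = ⊤, so 1 ∈ Csp ⊔ Psub
      have h1E : (1 : Q.ringCon.Quotient) ∈ E := by rw [htop]; exact TwoSidedIdeal.mem_top _
      obtain ⟨x, hxCP, hxe⟩ := (hEmem _).mp h1E
      have hxe' : (x : Q.ringCon.Quotient) = ((1 : ↥R) : Q.ringCon.Quotient) := hxe
      rw [RingCon.eq] at hxe'
      have hsub : x - 1 ∈ Q := (TwoSidedIdeal.rel_iff Q _ _).mp hxe'
      have hsubP : ((x : A) - 1) ∈ Psub := by
        have := (hQmem _).mp hsub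
        push_cast at this
        exact this
      have h1CP : (1 : A) ∈ CPsp := by
        have := CPsp.sub_mem hxCP (AddSubgroup.mem_sup_right hsubP)
        simpa using this
      obtain ⟨k, hk, p, hp, hkp⟩ := AddSubgroup.mem_sup.mp h1CP
      -- quasi-invert 1 - p
      obtain ⟨u, hu1, _⟩ := dubrovin_quasi_inv (R := R) (P := P)
        ⟨hPR, hP0, hPadd, hPneg, hPml, hPmr⟩ hjac ⟨p, hPR hp⟩ hp
      have hu1A : (u : A) * (1 - p) = 1 := by
        have := congrArg (fun t : ↥R => (t : A)) hu1
        push_cast at this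
        simpa using this
      have hk1p : k = 1 - p := eq_sub_of_add_eq hkp
      have h1C : (1 : A) ∈ Csp := by
        have h := hCl (u : A) u.2 k hk
        rw [hk1p, hu1A] at h
        exact h
      -- J ⊆ closure (J * P)
      have hJP : ∀ y ∈ J, y ∈ AddSubgroup.closure (J * P) := by
        intro y hy
        have h := AddSubgroup.closure_induction
          (p := fun t _ => t * y ∈ AddSubgroup.closure (J * P))
          (fun t ht => by
            obtain ⟨j₂, hj₂, i₂, hi₂, rfl⟩ := Set.mem_mul.mp ht
            rw [mul_assoc]
            exact AddSubgroup.subset_closure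
              (Set.mul_mem_mul hj₂ (hIJ (Set.mul_mem_mul hi₂ hy))))
          (by simpa using AddSubgroup.zero_mem _)
          (fun a b _ _ ha hb => by
            show (a + b) * y ∈ _
            rw [add_mul]; exact AddSubgroup.add_mem _ ha hb)
          (fun a _ ha => by
            show -a * y ∈ _
            rw [neg_mul]; exact AddSubgroup.neg_mem _ ha)
          h1C
        simpa using h
      -- the right ideal w * J of R, inside (↥R)ᵐᵒᵖ
      set rJ : Set A := {y : A | ∃ t ∈ J, w * t = y} with hrJdef
      have hrJR : ∀ y ∈ rJ, y ∈ R := by rintro y ⟨t, ht, rfl⟩; exact hwJ t ht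
      set W : Ideal (↥R)ᵐᵒᵖ :=
        { carrier := {z : (↥R)ᵐᵒᵖ | ((MulOpposite.unop z : ↥R) : A) ∈ rJ}
          add_mem' := by
            rintro a b ⟨s, hs, hws⟩ ⟨t, ht, hwt⟩
            exact ⟨s + t, hJ.1.2.1 s hs t ht, by
              show w * (s + t) = ((MulOpposite.unop (a + b) : ↥R) : A)
              rw [mul_add, hws, hwt]; push_cast; rfl⟩
          zero_mem' := ⟨0, hJ.1.1, by simp⟩
          smul_mem' := by
            rintro cc z ⟨s, hs, hws⟩
            refine ⟨s * ((MulOpposite.unop cc : ↥R) : A),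
              hJr _ (MulOpposite.unop cc).2 s hs, ?_⟩
            show w * (s * ((MulOpposite.unop cc : ↥R) : A)) =
              ((MulOpposite.unop (cc • z) : ↥R) : A)
            rw [← mul_assoc, hws, smul_eq_mul, MulOpposite.unop_mul]
            push_cast
            rfl } with hWdef
      have hWfg : W.FG := IsNoetherian.noetherian W
      obtain ⟨S, hS⟩ := hWfg
      set n := S.card with hn
      set e := S.equivFin with he
      set g : Fin n → A := fun m => (((e.symm m : (↥R)ᵐᵒᵖ).unop : ↥R) : A) with hgdef
      have hgrJ : ∀ m, g m ∈ rJ := by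
        intro m
        have hmem : ((e.symm m : (↥R)ᵐᵒᵖ)) ∈ W := by
          rw [← hS]
          exact Submodule.subset_span (e.symm m).2
        exact hmem
      -- φ : (↥R)ᵐᵒᵖ →+ A
      set φ : (↥R)ᵐᵒᵖ →+ A :=
        { toFun := fun z => ((MulOpposite.unop z : ↥R) : A)
          map_zero' := rfl
          map_add' := fun a b => rfl } with hφ
      have hrep : ∀ y ∈ rJ, ∃ cf : Fin n → A, (∀ m, cf m ∈ R) ∧ y = ∑ m, g m * cf m := by
        intro y hy
        have hyR : y ∈ R := hrJR y hy
        have hzW : (MulOpposite.op (⟨y, hyR⟩ : ↥R)) ∈ W := by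
          show ((MulOpposite.unop (MulOpposite.op (⟨y, hyR⟩ : ↥R)) : ↥R) : A) ∈ rJ
          simpa using hy
        rw [← hS] at hzW
        obtain ⟨f, -, hf⟩ := Submodule.mem_span_finset.mp hzW
        have hterm : ∀ z : (↥R)ᵐᵒᵖ,
            φ (f z • z) = ((MulOpposite.unop z : ↥R) : A) * ((MulOpposite.unop (f z) : ↥R) : A) := by
          intro z
          show ((MulOpposite.unop (f z • z) : ↥R) : A) = _
          rw [smul_eq_mul, MulOpposite.unop_mul]
          push_cast
          rfl
        refine ⟨fun m => ((MulOpposite.unop (f (e.symm m : (↥R)ᵐᵒᵖ)) : ↥R) : A),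
          fun m => SetLike.coe_mem _, ?_⟩
        have hfA : ∑ z ∈ S, φ (f z • z) = y := by
          rw [← map_sum, hf]
          rfl
        calc y = ∑ z ∈ S, φ (f z • z) := hfA.symm
          _ = ∑ z : {z // z ∈ S}, φ (f (z : (↥R)ᵐᵒᵖ) • (z : (↥R)ᵐᵒᵖ)) :=
            (Finset.sum_coe_sort S _).symm
          _ = ∑ m : Fin n, φ (f ((e.symm m : (↥R)ᵐᵒᵖ)) • ((e.symm m : (↥R)ᵐᵒᵖ))) :=
            (Equiv.sum_comp e.symm _).symm
          _ = ∑ m, g m * ((MulOpposite.unop (f (e.symm m : (↥R)ᵐᵒᵖ)) : ↥R) : A) := by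
            exact Finset.sum_congr rfl fun m _ => hterm _
      -- every generator is a J*P combination of generators
      have hgen : ∀ m, ∃ q : Fin n → A, (∀ l, q l ∈ P) ∧ g m = ∑ l, g l * q l := by
        intro m
        obtain ⟨t, ht, hwt⟩ := hgrJ m
        have htP := hJP t ht
        have h := AddSubgroup.closure_induction
          (p := fun s _ => ∃ q : Fin n → A, (∀ l, q l ∈ P) ∧ w * s = ∑ l, g l * q l)
          (fun s hs => by
            obtain ⟨j₂, hj₂, p₂, hp₂, rfl⟩ := Set.mem_mul.mp hs
            have hwj₂ : w * j₂ ∈ rJ := ⟨j₂, hj₂, rfl⟩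
            obtain ⟨cf, hcf, heq⟩ := hrep _ hwj₂
            refine ⟨fun l => cf l * p₂, fun l => hPml _ (hcf l) _ hp₂, ?_⟩
            rw [← mul_assoc, heq, Finset.sum_mul]
            exact Finset.sum_congr rfl fun l _ => by rw [mul_assoc])
          ⟨fun _ => 0, fun _ => hP0, by simp⟩
          (fun a b _ _ ha hb => by
            obtain ⟨q₁, hq₁, he₁⟩ := ha
            obtain ⟨q₂, hq₂, he₂⟩ := hb
            refine ⟨fun l => q₁ l + q₂ l, fun l => hPadd _ (hq₁ l) _ (hq₂ l), ?_⟩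
            rw [mul_add, he₁, he₂, ← Finset.sum_add_distrib]
            exact Finset.sum_congr rfl fun l _ => by rw [mul_add])
          (fun a _ ha => by
            obtain ⟨q₁, hq₁, he₁⟩ := ha
            refine ⟨fun l => -q₁ l, fun l => hPneg _ (hq₁ l), ?_⟩
            rw [mul_neg, he₁, ← Finset.sum_neg_distrib]
            exact Finset.sum_congr rfl fun l _ => by rw [mul_neg])
          htP
        obtain ⟨q, hq, heq⟩ := h
        exact ⟨q, hq, by rw [← hwt]; exact heq⟩
      -- Nakayama kills all generators
      have h0 : ∀ m, g m = 0 :=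
        dubrovin_nakayama (R := R) (P := P) ⟨hPR, hP0, hPadd, hPneg, hPml, hPmr⟩ hjac n g hgen
      -- contradiction with the regular element of J
      have hx0 : w * v0 ∈ rJ := ⟨v0, hv0J, rfl⟩
      obtain ⟨cf, hcf, heq⟩ := hrep _ hx0
      have hwv0 : w * v0 = 0 := by
        rw [heq]
        simp [h0]
      have hv00 : v0 = 0 := hwreg.2.1 v0 hv0reg.1 hwv0
      have h10 : (1 : A) = 0 := hv0reg.2.1 1 R.one_mem (by rw [hv00, zero_mul])
      exact one_ne_zero h10
  intro I J hI hJ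
  exact ⟨fun h => key I J hI hJ h, fun h => key J I hJ hI h⟩
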